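/- Let a, b be vectors in ℝ² with ⟨a, b⟩ = 0 and b ≠ 0. Then there exists σ ∈ ℝ such that a = σ · b^⊥, where b^⊥ = (-b₂, b₁). Consequently, if u is a nonvanishing element of the kernel of (δR_f)*, i.e., satisfying ½ u · dR_f(v) = (Δ_f u) df(v) for all tangent vectors v, then there exists a smooth function σ on Σ such that dR_f = -2σ df and Δ_f u = -σ u. -/

import Mathlib

open Matrix MeasureTheory Real

noncomputable section

/-- Scalar fields on the manifold `M`. -/
abbrev SF (M : Type*) := M → ℝ
/-- Vector fields (≅ one-forms via the metric) expressed in an orthonormal moving frame. -/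
abbrev VF (M : Type*) (n : ℕ) := M → Fin n → ℝ
/-- (0,2)-tensor fields expressed in a moving frame. -/
abbrev TF (M : Type*) (n : ℕ) := M → Matrix (Fin n) (Fin n) ℝ

variable {M : Type*} {n : ℕ}

/-- Pointwise metric pairing of two vector fields: `⟨X, Y⟩`. -/
def dotV (X Y : VF M n) : SF M := fun p => X p ⬝ᵥ Y p
/-- Pointwise metric pairing of two symmetric 2-tensors: `⟨A, B⟩ = tr (A B)`. -/
def pairT (A B : TF M n) : SF M := fun p => (A p * B p).trace
/-- The one-form `A(X, ·)` (identified with a vector field). -/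
def appT (A : TF M n) (X : VF M n) : VF M n := fun p => (A p).mulVec (X p)
/-- The trace of a 2-tensor. -/
def trT (A : TF M n) : SF M := fun p => (A p).trace
/-- The Riemannian metric `g` (the identity in an orthonormal frame). -/
def gMet (M : Type*) (n : ℕ) : TF M n := fun _ => (1 : Matrix (Fin n) (Fin n) ℝ)
/-- Multiplication of a 2-tensor by a scalar function. -/
def smulT (u : SF M) (A : TF M n) : TF M n := fun p => u p • A p
/-- Multiplication of a vector field by a scalar function. -/
def smulV (u : SF M) (X : VF M n) : VF M n := fun p => u p • X p
/-- The pointwise norm `|X|` of a vector field. -/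
def normV (X : VF M n) : SF M := fun p => Real.sqrt (X p ⬝ᵥ X p)

/-- The drift Laplacian `Δ_f u = Δu - ⟨∇f, ∇u⟩`. -/
def driftLap (Δ : SF M → SF M) (grad : SF M → VF M n) (f u : SF M) : SF M :=
  Δ u - dotV (grad f) (grad u)
/-- The Bakry–Émery Ricci tensor `Ric_f = Ric + ∇²f`. -/
def RicF (Ric : TF M n) (Hess : SF M → TF M n) (f : SF M) : TF M n := Ric + Hess f
/-- The Perelman scalar curvature `𝓡_f = R + 2Δf - |∇f|²`. -/
def perelmanR (R : SF M) (Δ : SF M → SF M) (grad : SF M → VF M n) (f : SF M) : SF M :=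
  R + 2 • Δ f - dotV (grad f) (grad f)
/-- The weighted divergence of a vector field: `div_f X = div X - ⟨X, ∇f⟩`. -/
def divfV (divV : VF M n → SF M) (grad : SF M → VF M n) (f : SF M) (X : VF M n) : SF M :=
  divV X - dotV X (grad f)
/-- The weighted divergence of a 2-tensor: `div_f A = div A - A(∇f, ·)`. -/
def divfT (divT : TF M n → VF M n) (grad : SF M → VF M n) (f : SF M) (A : TF M n) : VF M n :=
  divT A - appT A (grad f)
/-- The traceless part `A° = A - (tr A / n) g` of a 2-tensor. -/
def tracelessT (A : TF M n) : TF M n := A - smulT (fun p => trT A p / n) (gMet M n)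
/-- `u` lies in the kernel of `(δ𝓡_f)^*`, i.e. `-(Δ_f u) g + ∇²u - u Ric_f = 0`. -/
def PStatic (Δ : SF M → SF M) (grad : SF M → VF M n) (Hess : SF M → TF M n)
    (Ric : TF M n) (f u : SF M) : Prop :=
  smulT (-(driftLap Δ grad f u)) (gMet M n) + Hess u - smulT u (RicF Ric Hess f) = 0

/-- the linear algebra fact in ℝ² and its geometric consequence: if `u` is a
nonvanishing element of the kernel of `(δ𝓡_f)^*`, then `d𝓡_f = -2σ df` and `Δ_f u = -σ u`
for some function `σ`. -/
theorem statement5 {M : Type*} {n : ℕ}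
    (Δ : SF M → SF M) (grad : SF M → VF M n) (R f u : SF M)
    (hu : ∀ p, u p ≠ 0)
    -- the identity ½ u d𝓡_f(v) = (Δ_f u) df(v) for all tangent vectors v:
    (hid : ∀ (p : M) (v : Fin n → ℝ),
      (1/2 : ℝ) * u p * (grad (perelmanR R Δ grad f) p ⬝ᵥ v)
        = driftLap Δ grad f u p * (grad f p ⬝ᵥ v)) :
    (∀ a b : ℝ × ℝ, a.1 * b.1 + a.2 * b.2 = 0 → b ≠ 0 →
        ∃ σ : ℝ, a = σ • (-b.2, b.1))
    ∧ ∃ σ : SF M,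
        grad (perelmanR R Δ grad f) = smulV (fun p => -2 * σ p) (grad f)
        ∧ driftLap Δ grad f u = fun p => -(σ p) * u p := by
  constructor
  · intro a b hab hb
    have hb2 : b.1 ^ 2 + b.2 ^ 2 ≠ 0 := by
      intro h
      apply hb
      have h1 : b.1 = 0 := by nlinarith [sq_nonneg b.1, sq_nonneg b.2]
      have h2 : b.2 = 0 := by nlinarith [sq_nonneg b.1, sq_nonneg b.2]
      exact Prod.ext h1 h2
    refine ⟨(a.2 * b.1 - a.1 * b.2) / (b.1 ^ 2 + b.2 ^ 2), ?_⟩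
    have h1 : a.1 = (a.2 * b.1 - a.1 * b.2) / (b.1 ^ 2 + b.2 ^ 2) * (-b.2) := by
      field_simp; linear_combination b.1 * hab
    have h2 : a.2 = (a.2 * b.1 - a.1 * b.2) / (b.1 ^ 2 + b.2 ^ 2) * b.1 := by
      field_simp; linear_combination b.2 * hab
    exact Prod.ext h1 h2
  · refine ⟨fun p => -(driftLap Δ grad f u p) / u p, ?_, ?_⟩
    · funext p i
      have h := hid p (Pi.single i 1)
      simp [dotProduct_single] at h
      have hu' := hu p
      show grad (perelmanR R Δ grad f) p i
        = (-2 * (-(driftLap Δ grad f u p) / u p)) • grad f p i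
      field_simp
      rw [smul_eq_mul, div_mul_eq_mul_div, eq_div_iff hu']
      linear_combination 2 * h
    · funext p
      have hu' := hu p
      field_simp
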